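/- For n ≥ 1, the n-fold improper integral ∫_{ℝⁿ} e^{(i/2)(x₁²+⋯+x_n²)} dx, understood as the limit over expanding boxes [-a,a]ⁿ of iterated integrals, equals (√(2π/(-i)))ⁿ. -/

import Mathlib

open MeasureTheory Filter Real Set Complex intervalIntegral

noncomputable section FresnelAux

/-- The complex parameter `(ε - i)/2`. -/
def fresnelβ (ε : ℝ) : ℂ := ((ε : ℂ) - Complex.I) / 2

/-- The Gaussian/Fresnel integrand. -/
def fresnelf (ε : ℝ) (x : ℝ) : ℂ := Complex.exp (-fresnelβ ε * (x : ℂ) ^ 2)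

lemma fresnelβ_re (ε : ℝ) : (fresnelβ ε).re = ε / 2 := by
  simp [fresnelβ, Complex.div_re]

lemma fresnelβ_ne_zero (ε : ℝ) : fresnelβ ε ≠ 0 := by
  intro h
  have := congrArg Complex.im h
  simp [fresnelβ, Complex.div_im] at this

lemma one_le_abs_two_fresnelβ (ε : ℝ) : 1 ≤ ‖2 * fresnelβ ε‖ := by
  have : (2 : ℂ) * fresnelβ ε = (ε : ℂ) - Complex.I := by
    rw [fresnelβ]; ring
  rw [this, Complex.norm_def]
  have hsq : Complex.normSq ((ε:ℂ) - Complex.I) = ε ^ 2 + 1 := by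
    simp [Complex.normSq_apply]; ring
  rw [hsq]
  calc (1:ℝ) = Real.sqrt 1 := by simp
    _ ≤ Real.sqrt (ε ^ 2 + 1) := Real.sqrt_le_sqrt (by nlinarith [sq_nonneg ε])

lemma norm_fresnelf_le {ε : ℝ} (hε : 0 ≤ ε) (x : ℝ) : ‖fresnelf ε x‖ ≤ 1 := by
  rw [fresnelf, Complex.norm_exp]
  have : (-fresnelβ ε * (x:ℂ)^2).re = -(ε/2) * x^2 := by
    simp [fresnelβ, Complex.mul_re, Complex.div_re, Complex.div_im, ← Complex.ofReal_pow]
  rw [this]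
  exact Real.exp_le_one_iff.mpr (by nlinarith [sq_nonneg x])

lemma hasDerivAt_fresnelf (ε : ℝ) (x : ℝ) :
    HasDerivAt (fun y : ℝ => fresnelf ε y) (-fresnelβ ε * (2 * x) * fresnelf ε x) x := by
  have h : HasDerivAt (fun z : ℂ => Complex.exp (-fresnelβ ε * z ^ 2))
      (-fresnelβ ε * (2 * (x:ℂ)) * Complex.exp (-fresnelβ ε * (x:ℂ)^2)) (x : ℝ) := by
    have h1 : HasDerivAt (fun z : ℂ => -fresnelβ ε * z ^ 2) (-fresnelβ ε * (2 * (x:ℂ))) (x:ℝ) := by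
      simpa [mul_comm] using ((hasDerivAt_pow 2 ((x:ℝ):ℂ)).const_mul (-fresnelβ ε))
    simpa [mul_comm] using h1.cexp
  simpa [fresnelf] using h.comp_ofReal

/-- The tail integrand from integration by parts. -/
def fresnelt (ε : ℝ) (x : ℝ) : ℂ := (2 * fresnelβ ε)⁻¹ * ((x : ℂ) ^ 2)⁻¹ * fresnelf ε x

lemma two_fresnelβ_ne_zero (ε : ℝ) : (2 : ℂ) * fresnelβ ε ≠ 0 :=
  mul_ne_zero two_ne_zero (fresnelβ_ne_zero ε)

lemma norm_fresnelt_le {ε : ℝ} (hε : 0 ≤ ε) {x : ℝ} (hx : 1 ≤ x) :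
    ‖fresnelt ε x‖ ≤ (x ^ 2)⁻¹ := by
  have hx0 : (0:ℝ) < x := lt_of_lt_of_le one_pos hx
  rw [fresnelt, norm_mul, norm_mul]
  have h1 : ‖((2 : ℂ) * fresnelβ ε)⁻¹‖ ≤ 1 := by
    rw [norm_inv]
    rw [show ‖(2:ℂ) * fresnelβ ε‖ = ‖2 * fresnelβ ε‖ from rfl]
    exact inv_le_one_of_one_le₀ (one_le_abs_two_fresnelβ ε)
  have h2 : ‖(((x:ℝ) : ℂ) ^ 2)⁻¹‖ = (x ^ 2)⁻¹ := by
    rw [norm_inv, norm_pow, Complex.norm_real, Real.norm_of_nonneg hx0.le]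
  rw [h2]
  have h3 : ‖fresnelf ε x‖ ≤ 1 := norm_fresnelf_le hε x
  have h4 := mul_le_mul (mul_le_mul_of_nonneg_right h1 (by positivity : (0:ℝ) ≤ (x ^ 2)⁻¹))
    h3 (norm_nonneg _) (by positivity)
  calc ‖((2 : ℂ) * fresnelβ ε)⁻¹‖ * (x ^ 2)⁻¹ * ‖fresnelf ε x‖
      ≤ 1 * (x ^ 2)⁻¹ * 1 := h4
    _ = (x ^ 2)⁻¹ := by ring

lemma continuous_fresnelf (ε : ℝ) : Continuous (fun x : ℝ => fresnelf ε x) := by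
  unfold fresnelf
  fun_prop

lemma continuousOn_fresnelt (ε : ℝ) :
    ContinuousOn (fun x : ℝ => fresnelt ε x) {x : ℝ | x ≠ 0} := by
  unfold fresnelt
  apply ContinuousOn.mul
  · apply ContinuousOn.mul continuousOn_const
    apply ContinuousOn.inv₀
    · fun_prop
    · intro x hx
      simpa using pow_ne_zero 2 (Complex.ofReal_ne_zero.mpr hx)
  · exact (continuous_fresnelf ε).continuousOn

lemma integrableOn_inv_sq : IntegrableOn (fun x : ℝ => (x ^ 2)⁻¹) (Ioi 1) := by
  have := integrableOn_Ioi_rpow_of_lt (show (-2:ℝ) < -1 by norm_num) one_pos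
  apply this.congr_fun ?_ measurableSet_Ioi
  intro x hx
  show x ^ (-2 : ℝ) = (x ^ 2)⁻¹
  rw [show (-2:ℝ) = -((2:ℕ):ℝ) by norm_num, Real.rpow_neg (le_of_lt (lt_trans one_pos hx)),
    Real.rpow_natCast]

lemma integrableOn_fresnelt {ε : ℝ} (hε : 0 ≤ ε) :
    IntegrableOn (fun x : ℝ => fresnelt ε x) (Ioi 1) := by
  apply Integrable.mono' integrableOn_inv_sq
  · apply ((continuousOn_fresnelt ε).mono ?_).aestronglyMeasurable measurableSet_Ioi
    intro x hx
    exact ne_of_gt (lt_trans one_pos hx)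
  · filter_upwards [ae_restrict_mem measurableSet_Ioi] with x hx
    exact norm_fresnelt_le hε (le_of_lt hx)

lemma fresnel_ibp (ε : ℝ) {R : ℝ} (hR : 1 ≤ R) :
    ∫ x in (1:ℝ)..R, fresnelf ε x
      = -((2 * fresnelβ ε)⁻¹ * (R : ℂ)⁻¹) * fresnelf ε R
        + (2 * fresnelβ ε)⁻¹ * fresnelf ε 1
        - ∫ x in (1:ℝ)..R, fresnelt ε x := by
  have huIcc : Set.uIcc (1:ℝ) R = Set.Icc 1 R := Set.uIcc_of_le hR
  set c := fresnelβ ε with hc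
  have hpos : ∀ x ∈ Set.uIcc (1:ℝ) R, (0:ℝ) < x := by
    intro x hx
    rw [huIcc] at hx
    exact lt_of_lt_of_le one_pos hx.1
  have key := intervalIntegral.integral_mul_deriv_eq_deriv_mul
    (u := fun x : ℝ => -((2 * c)⁻¹ * ((x:ℝ):ℂ)⁻¹))
    (v := fun x : ℝ => fresnelf ε x)
    (u' := fun x : ℝ => (2 * c)⁻¹ * (((x:ℝ):ℂ) ^ 2)⁻¹)
    (v' := fun x : ℝ => -c * (2 * (x:ℝ)) * fresnelf ε x)
    (a := 1) (b := R)
    (fun x hx => by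
      have hx0 : ((x:ℝ):ℂ) ≠ 0 := Complex.ofReal_ne_zero.mpr (ne_of_gt (hpos x hx))
      have h1 : HasDerivAt (fun z : ℂ => z⁻¹) (-(((x:ℝ):ℂ) ^ 2)⁻¹) ((x:ℝ):ℂ) :=
        hasDerivAt_inv hx0
      have h2 := (h1.comp_ofReal.const_mul ((2 * c)⁻¹)).neg
      convert h2 using 1
      · rfl
      · rfl
      · ring)
    (fun x hx => hasDerivAt_fresnelf ε x)
    (by
      apply ContinuousOn.intervalIntegrable
      apply ContinuousOn.mul continuousOn_const
      apply ContinuousOn.inv₀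
      · fun_prop
      · intro x hx
        simpa using pow_ne_zero 2 (Complex.ofReal_ne_zero.mpr (ne_of_gt (hpos x hx))))
    (by
      apply Continuous.intervalIntegrable
      have := continuous_fresnelf ε
      fun_prop)
  have hL : ∫ x in (1:ℝ)..R, -((2 * c)⁻¹ * ((x:ℝ):ℂ)⁻¹) * (-c * (2 * (x:ℝ)) * fresnelf ε x)
      = ∫ x in (1:ℝ)..R, fresnelf ε x := by
    apply intervalIntegral.integral_congr
    intro x hx
    have hx0 : ((x:ℝ):ℂ) ≠ 0 := Complex.ofReal_ne_zero.mpr (ne_of_gt (hpos x hx))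
    have hc0 : c ≠ 0 := fresnelβ_ne_zero ε
    field_simp
  have hT : ∫ x in (1:ℝ)..R, (2 * c)⁻¹ * (((x:ℝ):ℂ) ^ 2)⁻¹ * fresnelf ε x
      = ∫ x in (1:ℝ)..R, fresnelt ε x := rfl
  rw [hL, hT] at key
  rw [key]
  push_cast
  ring

/-- The limit value of `∫_0^R fresnelf ε`. -/
def fresnelΨ (ε : ℝ) : ℂ :=
  (∫ x in (0:ℝ)..1, fresnelf ε x) + (2 * fresnelβ ε)⁻¹ * fresnelf ε 1
    - ∫ x in Ioi (1:ℝ), fresnelt ε x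

lemma tendsto_fresnel_halfline {ε : ℝ} (hε : 0 ≤ ε) :
    Tendsto (fun R : ℝ => ∫ x in (0:ℝ)..R, fresnelf ε x) atTop (nhds (fresnelΨ ε)) := by
  have hbdry : Tendsto
      (fun R : ℝ => -((2 * fresnelβ ε)⁻¹ * (R : ℂ)⁻¹) * fresnelf ε R) atTop (nhds 0) := by
    apply squeeze_zero_norm' ?_ tendsto_inv_atTop_zero
    filter_upwards [eventually_ge_atTop (1:ℝ)] with R hR
    have hR0 : (0:ℝ) < R := lt_of_lt_of_le one_pos hR
    rw [norm_mul, norm_neg, norm_mul, norm_inv, norm_inv, Complex.norm_real,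
      Real.norm_of_nonneg hR0.le]
    have h1 : ‖(2:ℂ) * fresnelβ ε‖⁻¹ ≤ 1 := inv_le_one_of_one_le₀ (one_le_abs_two_fresnelβ ε)
    have h3 : ‖fresnelf ε R‖ ≤ 1 := norm_fresnelf_le hε R
    calc ‖(2:ℂ) * fresnelβ ε‖⁻¹ * R⁻¹ * ‖fresnelf ε R‖ ≤ 1 * R⁻¹ * 1 :=
      mul_le_mul (mul_le_mul_of_nonneg_right h1 (by positivity)) h3 (norm_nonneg _) (by positivity)
    _ = R⁻¹ := by ring
  have htail : Tendsto (fun R : ℝ => ∫ x in (1:ℝ)..R, fresnelt ε x) atTop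
      (nhds (∫ x in Ioi (1:ℝ), fresnelt ε x)) :=
    intervalIntegral_tendsto_integral_Ioi 1 (integrableOn_fresnelt hε) tendsto_id
  have hmain : Tendsto
      (fun R : ℝ => (∫ x in (0:ℝ)..1, fresnelf ε x)
        + (-((2 * fresnelβ ε)⁻¹ * (R : ℂ)⁻¹) * fresnelf ε R
            + (2 * fresnelβ ε)⁻¹ * fresnelf ε 1
            - ∫ x in (1:ℝ)..R, fresnelt ε x)) atTop (nhds (fresnelΨ ε)) := by
    have h2 := ((hbdry.add (tendsto_const_nhds
        (x := (2 * fresnelβ ε)⁻¹ * fresnelf ε 1) (f := atTop (α := ℝ)))).sub htail).const_add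
      (∫ x in (0:ℝ)..1, fresnelf ε x)
    convert h2 using 2
    rw [fresnelΨ]
    ring
  apply hmain.congr'
  filter_upwards [eventually_ge_atTop (1:ℝ)] with R hR
  have hadd : ∫ x in (0:ℝ)..R, fresnelf ε x
      = (∫ x in (0:ℝ)..1, fresnelf ε x) + ∫ x in (1:ℝ)..R, fresnelf ε x := by
    rw [intervalIntegral.integral_add_adjacent_intervals] <;>
      exact (continuous_fresnelf ε).intervalIntegrable _ _
  rw [hadd, fresnel_ibp ε hR]

lemma fresnelf_even (ε : ℝ) (x : ℝ) : fresnelf ε (-x) = fresnelf ε x := by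
  unfold fresnelf
  push_cast
  ring_nf

lemma fresnel_symm (ε : ℝ) (R : ℝ) :
    ∫ x in (-R)..R, fresnelf ε x = 2 * ∫ x in (0:ℝ)..R, fresnelf ε x := by
  have h1 : ∫ x in (-R)..(0:ℝ), fresnelf ε x = ∫ x in (0:ℝ)..R, fresnelf ε x := by
    have := intervalIntegral.integral_comp_neg (a := (0:ℝ)) (b := R) (fun x => fresnelf ε x)
    rw [neg_zero] at this
    rw [← this]
    apply intervalIntegral.integral_congr
    intro x _
    exact fresnelf_even ε x
  have h2 : ∫ x in (-R)..R, fresnelf ε x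
      = (∫ x in (-R)..(0:ℝ), fresnelf ε x) + ∫ x in (0:ℝ)..R, fresnelf ε x := by
    rw [intervalIntegral.integral_add_adjacent_intervals] <;>
      exact (continuous_fresnelf ε).intervalIntegrable _ _
  rw [h2, h1]
  ring

lemma fresnel_gaussian_eq {ε : ℝ} (hε : 0 < ε) :
    ((π : ℂ) / fresnelβ ε) ^ ((1:ℂ)/2) = 2 * fresnelΨ ε := by
  have hre : 0 < (fresnelβ ε).re := by rw [fresnelβ_re]; linarith
  have hint : Integrable (fun x : ℝ => fresnelf ε x) := integrable_cexp_neg_mul_sq hre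
  have h1 : Tendsto (fun R : ℝ => ∫ x in (-R)..R, fresnelf ε x) atTop
      (nhds (∫ x : ℝ, fresnelf ε x)) :=
    intervalIntegral_tendsto_integral hint tendsto_neg_atTop_atBot tendsto_id
  have h2 : Tendsto (fun R : ℝ => ∫ x in (-R)..R, fresnelf ε x) atTop
      (nhds (2 * fresnelΨ ε)) := by
    have := (tendsto_fresnel_halfline hε.le).const_mul (2:ℂ)
    apply this.congr
    intro R
    rw [fresnel_symm]
  have h3 : ∫ x : ℝ, fresnelf ε x = 2 * fresnelΨ ε := tendsto_nhds_unique h1 h2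
  rw [← h3]
  exact (integral_gaussian_complex hre).symm

lemma fresnelβ_zero : fresnelβ 0 = -Complex.I / 2 := by
  simp [fresnelβ]

lemma fresnel_base : (π : ℂ) / fresnelβ 0 = 2 * π * Complex.I := by
  rw [fresnelβ_zero]
  field_simp [Complex.I_ne_zero]
  linear_combination (-1:ℂ) * Complex.I_mul_I

lemma continuous_fresnelβ : Continuous fresnelβ := by
  unfold fresnelβ; fun_prop

lemma continuous_inv_two_fresnelβ : Continuous (fun ε : ℝ => (2 * fresnelβ ε)⁻¹) :=
  (continuous_const.mul continuous_fresnelβ).inv₀ two_fresnelβ_ne_zero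

lemma tendsto_fresnelf_param (x : ℝ) :
    Tendsto (fun ε : ℝ => fresnelf ε x) (nhdsWithin 0 (Ioi 0)) (nhds (fresnelf 0 x)) := by
  have hc : Continuous (fun ε : ℝ => fresnelf ε x) := by
    unfold fresnelf
    exact (continuous_fresnelβ.neg.mul continuous_const).cexp
  exact (hc.tendsto 0).mono_left nhdsWithin_le_nhds

lemma tendsto_fresnelt_param (x : ℝ) :
    Tendsto (fun ε : ℝ => fresnelt ε x) (nhdsWithin 0 (Ioi 0)) (nhds (fresnelt 0 x)) := by
  have hc : Continuous (fun ε : ℝ => fresnelt ε x) := by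
    unfold fresnelt
    exact ((continuous_inv_two_fresnelβ.mul continuous_const).mul
      ((continuous_fresnelβ.neg.mul continuous_const).cexp))
  exact (hc.tendsto 0).mono_left nhdsWithin_le_nhds

lemma tendsto_fresnelΨ :
    Tendsto fresnelΨ (nhdsWithin 0 (Ioi 0)) (nhds (fresnelΨ 0)) := by
  have hA : Tendsto (fun ε : ℝ => ∫ x in (0:ℝ)..1, fresnelf ε x) (nhdsWithin 0 (Ioi 0))
      (nhds (∫ x in (0:ℝ)..1, fresnelf 0 x)) := by
    simp_rw [intervalIntegral.integral_of_le (zero_le_one (α := ℝ))]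
    apply MeasureTheory.tendsto_integral_filter_of_dominated_convergence (bound := fun _ => (1:ℝ))
    · filter_upwards with ε
      exact ((continuous_fresnelf ε).aestronglyMeasurable).restrict
    · filter_upwards [self_mem_nhdsWithin] with ε (hε : ε ∈ Ioi (0:ℝ))
      filter_upwards with x
      exact norm_fresnelf_le (le_of_lt hε) x
    · simp [integrableOn_const]
    · filter_upwards with x
      exact tendsto_fresnelf_param x
  have hB : Tendsto (fun ε : ℝ => (2 * fresnelβ ε)⁻¹ * fresnelf ε 1) (nhdsWithin 0 (Ioi 0))
      (nhds ((2 * fresnelβ 0)⁻¹ * fresnelf 0 1)) := by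
    have hc : Continuous (fun ε : ℝ => (2 * fresnelβ ε)⁻¹ * fresnelf ε 1) :=
      continuous_inv_two_fresnelβ.mul
        ((continuous_fresnelβ.neg.mul continuous_const).cexp)
    exact (hc.tendsto 0).mono_left nhdsWithin_le_nhds
  have hC : Tendsto (fun ε : ℝ => ∫ x in Ioi (1:ℝ), fresnelt ε x) (nhdsWithin 0 (Ioi 0))
      (nhds (∫ x in Ioi (1:ℝ), fresnelt 0 x)) := by
    apply MeasureTheory.tendsto_integral_filter_of_dominated_convergence
      (bound := fun x : ℝ => (x ^ 2)⁻¹)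
    · filter_upwards with ε
      apply ((continuousOn_fresnelt ε).mono ?_).aestronglyMeasurable measurableSet_Ioi
      intro x hx
      exact ne_of_gt (lt_trans one_pos hx)
    · filter_upwards [self_mem_nhdsWithin] with ε (hε : ε ∈ Ioi (0:ℝ))
      filter_upwards [ae_restrict_mem measurableSet_Ioi] with x hx
      exact norm_fresnelt_le (le_of_lt hε) (le_of_lt hx)
    · exact integrableOn_inv_sq
    · filter_upwards with x
      exact tendsto_fresnelt_param x
  exact (hA.add hB).sub hC

lemma two_psi_eq : 2 * fresnelΨ 0 = ((2:ℂ) * π * Complex.I) ^ ((1:ℂ)/2) := by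
  have hA : Tendsto (fun ε : ℝ => 2 * fresnelΨ ε) (nhdsWithin 0 (Ioi 0))
      (nhds (2 * fresnelΨ 0)) := tendsto_fresnelΨ.const_mul 2
  have hB : Tendsto (fun ε : ℝ => ((π:ℂ) / fresnelβ ε) ^ ((1:ℂ)/2)) (nhdsWithin 0 (Ioi 0))
      (nhds (((2:ℂ) * π * Complex.I) ^ ((1:ℂ)/2))) := by
    rw [← fresnel_base]
    apply Tendsto.mono_left _ nhdsWithin_le_nhds
    apply ContinuousAt.tendsto
    have hd : ContinuousAt (fun ε : ℝ => (π:ℂ) / fresnelβ ε) 0 :=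
      (continuous_const.div continuous_fresnelβ fresnelβ_ne_zero).continuousAt
    have hc : ContinuousAt (fun z : ℂ => z ^ ((1:ℂ)/2)) ((π:ℂ) / fresnelβ 0) := by
      apply continuousAt_cpow_const
      rw [fresnel_base]
      apply Complex.mem_slitPlane_iff.mpr
      right
      simp [Real.pi_ne_zero]
    have hcomp := ContinuousAt.comp (x := (0:ℝ)) (g := fun z : ℂ => z ^ ((1:ℂ)/2))
      (f := fun ε : ℝ => (π:ℂ) / fresnelβ ε) hc hd
    exact hcomp
  have hB' : Tendsto (fun ε : ℝ => 2 * fresnelΨ ε) (nhdsWithin 0 (Ioi 0))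
      (nhds (((2:ℂ) * π * Complex.I) ^ ((1:ℂ)/2))) := by
    apply hB.congr'
    filter_upwards [self_mem_nhdsWithin] with ε (hε : ε ∈ Ioi (0:ℝ))
    exact fresnel_gaussian_eq hε
  exact tendsto_nhds_unique hA hB'

lemma cpow_value : ((2:ℂ) * π * Complex.I) ^ ((1:ℂ)/2)
    = (Real.sqrt (2 * π) : ℂ) * Complex.exp (Complex.I * π / 4) := by
  set w : ℂ := (Real.sqrt (2 * π) : ℂ) * Complex.exp (Complex.I * π / 4) with hw
  have hw' : w = (Real.sqrt (2 * π) : ℂ)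
      * (Complex.cos (((π/4 : ℝ) : ℂ)) + Complex.sin (((π/4 : ℝ) : ℂ)) * Complex.I) := by
    rw [hw, show Complex.I * (π:ℂ) / 4 = ((π/4 : ℝ) : ℂ) * Complex.I by push_cast; ring,
      Complex.exp_mul_I]
  have hre : 0 < w.re := by
    have hwre : w.re = Real.sqrt (2 * π) * Real.cos (π/4) := by
      rw [hw', ← Complex.ofReal_cos, ← Complex.ofReal_sin]
      simp
    rw [hwre, Real.cos_pi_div_four]
    have h1 : 0 < Real.sqrt (2 * π) := Real.sqrt_pos.mpr (by positivity)
    have h3 : 0 < Real.sqrt 2 := Real.sqrt_pos.mpr (by norm_num)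
    positivity
  have hsq : w ^ (2:ℕ) = (2:ℂ) * π * Complex.I := by
    rw [hw, mul_pow, ← Complex.ofReal_pow, Real.sq_sqrt (by positivity),
      ← Complex.exp_nat_mul]
    rw [show ((2:ℕ):ℂ) * (Complex.I * π / 4) = ((π/2 : ℝ) : ℂ) * Complex.I by push_cast; ring,
      Complex.exp_mul_I, ← Complex.ofReal_cos, ← Complex.ofReal_sin,
      Real.cos_pi_div_two, Real.sin_pi_div_two]
    push_cast
    ring
  have := Complex.sq_cpow_two_inv hre
  rw [hsq] at this
  rw [show ((1:ℂ)/2) = (2⁻¹ : ℂ) by norm_num, this]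

lemma fresnel_one_dim :
    Tendsto (fun a : ℝ => ∫ x in (-a)..a, Complex.exp (Complex.I / 2 * (x:ℂ) ^ 2)) atTop
      (nhds ((Real.sqrt (2 * π) : ℂ) * Complex.exp (Complex.I * π / 4))) := by
  have hf : ∀ x : ℝ, Complex.exp (Complex.I / 2 * (x:ℂ) ^ 2) = fresnelf 0 x := by
    intro x
    rw [fresnelf, fresnelβ_zero]
    ring_nf
  have h1 : Tendsto (fun a : ℝ => 2 * ∫ x in (0:ℝ)..a, fresnelf 0 x) atTop
      (nhds (2 * fresnelΨ 0)) := (tendsto_fresnel_halfline le_rfl).const_mul 2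
  rw [two_psi_eq, cpow_value] at h1
  apply h1.congr
  intro a
  rw [← fresnel_symm]
  apply intervalIntegral.integral_congr
  intro x _
  exact (hf x).symm

end FresnelAux

lemma fresnel_box_eq (n : ℕ) {a : ℝ} (ha : 0 ≤ a) :
    ∫ x in Set.univ.pi (fun _ : Fin n => Set.Icc (-a) a),
        Complex.exp (Complex.I / 2 * ∑ j : Fin n, ((x j : ℂ)) ^ 2)
      = (∫ x in (-a)..a, Complex.exp (Complex.I / 2 * (x:ℂ) ^ 2)) ^ n := by
  set g : ℝ → ℂ :=
    Set.indicator (Set.Icc (-a) a) (fun t : ℝ => Complex.exp (Complex.I/2 * (t:ℂ)^2)) with hg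
  have hmeas : MeasurableSet (Set.univ.pi (fun _ : Fin n => Set.Icc (-a) a)) :=
    MeasurableSet.univ_pi (fun _ => measurableSet_Icc)
  rw [← MeasureTheory.integral_indicator hmeas]
  have hfac : ∀ x : Fin n → ℝ,
      Set.indicator (Set.univ.pi (fun _ : Fin n => Set.Icc (-a) a))
        (fun x : Fin n → ℝ => Complex.exp (Complex.I/2 * ∑ j : Fin n, ((x j : ℂ))^2)) x
        = ∏ j : Fin n, g (x j) := by
    intro x
    by_cases hx : x ∈ Set.univ.pi (fun _ : Fin n => Set.Icc (-a) a)
    · rw [Set.indicator_of_mem hx, Finset.mul_sum, Complex.exp_sum]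
      apply Finset.prod_congr rfl
      intro j _
      rw [hg, Set.indicator_of_mem (hx j (Set.mem_univ j))]
    · rw [Set.indicator_of_notMem hx]
      rw [Set.mem_pi] at hx
      push_neg at hx
      obtain ⟨j, _, hj⟩ := hx
      exact (Finset.prod_eq_zero (Finset.mem_univ j)
        (by rw [hg, Set.indicator_of_notMem hj])).symm
  simp only [hfac]
  rw [MeasureTheory.integral_fintype_prod_volume_eq_pow (ι := Fin n) g]
  simp only [Fintype.card_fin]
  congr 1
  rw [hg, MeasureTheory.integral_indicator measurableSet_Icc,
    MeasureTheory.integral_Icc_eq_integral_Ioc,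
    ← intervalIntegral.integral_of_le (neg_le_self ha)]

/-- For `n ≥ 1`, the improper integral of `e^{(i/2)(x₁²+⋯+x_n²)}` over expanding boxes
`[-a,a]ⁿ` equals `(√(2π/(-i)))ⁿ = (√(2π)·e^{iπ/4})ⁿ`. -/
theorem fresnel_integral_multidim (n : ℕ) (hn : 1 ≤ n) :
    Tendsto
      (fun a : ℝ =>
        ∫ x in Set.univ.pi (fun _ : Fin n => Set.Icc (-a) a),
          Complex.exp (Complex.I / 2 * ∑ j : Fin n, ((x j : ℂ)) ^ 2))
      atTop
      (nhds (((Real.sqrt (2 * Real.pi) : ℂ) * Complex.exp (Complex.I * Real.pi / 4)) ^ n)) := by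
  have h := fresnel_one_dim.pow n
  apply h.congr'
  filter_upwards [eventually_ge_atTop (0:ℝ)] with a ha
  exact (fresnel_box_eq n ha).symm
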